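/- Suppose the dynamical system (X,T,μ) satisfies the exponential concentration inequality with constant C > 0. Then there exists a constant D > 0, depending only on the system and the noise, such that for every ε > 0, every n ≥ 1, and every separately Lipschitz K : (ℝ^d)^n → ℝ, the observed system satisfies E_{μ_n ⊗ P^n}[exp(K(y_0,…,y_{n−1}) − E_{μ_n ⊗ P^n}[K(y_0,…,y_{n−1})])] ≤ exp(D (1 + ε²) Σ_{j=0}^{n−1} Lip_j(K)²). -/

import Mathlib

open MeasureTheory Real

noncomputable section

/-- `K` is separately Lipschitz in each of its `n` variables, with
`L j` a Lipschitz constant for the `j`-th variable. -/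
def SepLip {E : Type*} [PseudoMetricSpace E] {n : ℕ}
    (K : (Fin n → E) → ℝ) (L : Fin n → ℝ) : Prop :=
  ∀ (x : Fin n → E) (j : Fin n) (y : E),
    |K x - K (Function.update x j y)| ≤ L j * dist (x j) y

lemma exp_le_add_exp_sq (t : ℝ) : exp t ≤ t + exp (t ^ 2) := by
  rcases le_or_gt |t| 1 with h | h
  · have hb := Real.exp_bound h (n := 2) (by norm_num)
    have hsum : (∑ i ∈ Finset.range 2, t ^ i / (Nat.factorial i : ℝ)) = 1 + t := by
      simp [Finset.sum_range_succ]
    rw [hsum] at hb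
    have h1 := (abs_le.1 hb).2
    have h2 : t ^ 2 + 1 ≤ exp (t ^ 2) := Real.add_one_le_exp _
    have h3 : |t| ^ 2 = t ^ 2 := sq_abs t
    norm_num [h3, Nat.factorial] at h1
    nlinarith [sq_nonneg t]
  · have ht2 : |t| ≤ t ^ 2 := by nlinarith [abs_nonneg t, sq_abs t]
    rcases le_or_gt 0 t with h0 | h0
    · have h1 : exp t ≤ exp (t ^ 2) := exp_le_exp.2 (by rwa [abs_of_nonneg h0] at ht2)
      linarith
    · have h1 : exp t ≤ 1 := by
        calc exp t ≤ exp 0 := exp_le_exp.2 h0.le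
          _ = 1 := exp_zero
      have h2 : t ^ 2 + 1 ≤ exp (t ^ 2) := Real.add_one_le_exp _
      have h3 : -t ≤ t ^ 2 := by rwa [abs_of_neg h0] at ht2
      linarith

lemma SepLip.dist_le' {E : Type*} [PseudoMetricSpace E] {n : ℕ}
    {K : (Fin n → E) → ℝ} {L : Fin n → ℝ}
    (h : SepLip K L) (x y : Fin n → E) :
    |K x - K y| ≤ ∑ j, |L j| * dist (x j) (y j) := by
  classical
  set f : ℕ → ℝ := fun k => K (fun i => if (i : ℕ) < k then y i else x i) with hf
  set D : ℕ → ℝ := fun k =>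
    if hk : k < n then |L ⟨k, hk⟩| * dist (x ⟨k, hk⟩) (y ⟨k, hk⟩) else 0 with hD
  have hf0 : f 0 = K x := by simp [hf]
  have hfn : f n = K y := by
    simp only [hf]
    congr 1
    funext i
    simp [i.isLt]
  have hstep : ∀ k ∈ Finset.range n, |f k - f (k + 1)| ≤ D k := by
    intro k hkr
    have hk : k < n := Finset.mem_range.1 hkr
    have hupd : (fun i : Fin n => if (i : ℕ) < k + 1 then y i else x i)
        = Function.update (fun i : Fin n => if (i : ℕ) < k then y i else x i)
            ⟨k, hk⟩ (y ⟨k, hk⟩) := by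
      funext i
      rcases eq_or_ne i ⟨k, hk⟩ with rfl | hik
      · simp
      · have hik' : (i : ℕ) ≠ k := fun hh => hik (Fin.ext hh)
        rw [Function.update_of_ne hik]
        exact if_congr (by omega) rfl rfl
    have hh := h (fun i : Fin n => if (i : ℕ) < k then y i else x i) ⟨k, hk⟩ (y ⟨k, hk⟩)
    rw [show (if ((⟨k, hk⟩ : Fin n) : ℕ) < k then y ⟨k, hk⟩ else x ⟨k, hk⟩) = x ⟨k, hk⟩
      from if_neg (by simp)] at hh
    have heq : |f k - f (k + 1)|
        ≤ L ⟨k, hk⟩ * dist (x ⟨k, hk⟩) (y ⟨k, hk⟩) := by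
      simp only [hf]
      rw [hupd]
      exact hh
    rw [hD]
    simp only [dif_pos hk]
    calc |f k - f (k+1)| ≤ L ⟨k, hk⟩ * dist (x ⟨k, hk⟩) (y ⟨k, hk⟩) := heq
      _ ≤ |L ⟨k, hk⟩| * dist (x ⟨k, hk⟩) (y ⟨k, hk⟩) :=
          mul_le_mul_of_nonneg_right (le_abs_self _) dist_nonneg
  have tele : f 0 - f n = ∑ k ∈ Finset.range n, (f k - f (k + 1)) :=
    (Finset.sum_range_sub' f n).symm
  calc |K x - K y| = |∑ k ∈ Finset.range n, (f k - f (k + 1))| := by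
        rw [← hf0, ← hfn, ← tele]
    _ ≤ ∑ k ∈ Finset.range n, |f k - f (k + 1)| := Finset.abs_sum_le_sum_abs _ _
    _ ≤ ∑ k ∈ Finset.range n, D k := Finset.sum_le_sum hstep
    _ = ∑ j : Fin n, |L j| * dist (x j) (y j) := by
        rw [← Fin.sum_univ_eq_sum_range D n]
        refine Finset.sum_congr rfl fun j _ => ?_
        rw [hD]
        simp only [dif_pos j.isLt, Fin.eta]

lemma SepLip.lipschitz {E : Type*} [PseudoMetricSpace E] {n : ℕ}
    {K : (Fin n → E) → ℝ} {L : Fin n → ℝ} (h : SepLip K L) :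
    LipschitzWith (Real.toNNReal (∑ j : Fin n, |L j|)) K := by
  apply LipschitzWith.of_dist_le_mul
  intro x y
  rw [Real.dist_eq, Real.coe_toNNReal _ (Finset.sum_nonneg fun j _ => abs_nonneg _)]
  calc |K x - K y| ≤ ∑ j, |L j| * dist (x j) (y j) := h.dist_le' x y
    _ ≤ ∑ j : Fin n, |L j| * dist x y :=
        Finset.sum_le_sum fun j _ =>
          mul_le_mul_of_nonneg_left (dist_le_pi_dist x y j) (abs_nonneg _)
    _ = (∑ j : Fin n, |L j|) * dist x y := (Finset.sum_mul _ _ _).symm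

lemma SepLip.continuous' {E : Type*} [PseudoMetricSpace E] {n : ℕ}
    {K : (Fin n → E) → ℝ} {L : Fin n → ℝ} (h : SepLip K L) : Continuous K :=
  h.lipschitz.continuous

lemma integrable_of_ae_abs_le {α : Type*} [MeasurableSpace α] {μ : Measure α}
    [IsFiniteMeasure μ] {f : α → ℝ} (hf : AEStronglyMeasurable f μ) {B : ℝ}
    (h : ∀ᵐ a ∂μ, |f a| ≤ B) : Integrable f μ :=
  (integrable_const B).mono' hf (by filter_upwards [h] with a ha; rwa [Real.norm_eq_abs])

lemma one_var {α : Type*} [MeasurableSpace α] (ν : Measure α) [IsProbabilityMeasure ν]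
    (g : α → ℝ) (hg : AEStronglyMeasurable g ν) (c M m : ℝ)
    (hae : ∀ᵐ a ∂ν, |g a - c| ≤ M) (hm : m = ∫ b, g b ∂ν) :
    ∫ a, exp (g a - m) ∂ν ≤ exp (4 * M ^ 2) := by
  have hgi : Integrable g ν := by
    refine integrable_of_ae_abs_le hg (B := |c| + M) ?_
    filter_upwards [hae] with a ha
    have h2 := abs_sub_abs_le_abs_sub (g a) c
    linarith
  have hmc : |m - c| ≤ M := by
    have h0 : m - c = ∫ a, (g a - c) ∂ν := by
      rw [hm, integral_sub hgi (integrable_const c), integral_const, probReal_univ,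
        one_smul]
    rw [h0]
    calc |∫ a, (g a - c) ∂ν| ≤ ∫ a, |g a - c| ∂ν := by
          simpa [Real.norm_eq_abs] using
            norm_integral_le_integral_norm (μ := ν) (f := fun a => g a - c)
      _ ≤ ∫ _a, M ∂ν := by
          refine integral_mono_of_nonneg (Filter.Eventually.of_forall fun a => abs_nonneg _)
            (integrable_const M) hae
      _ = M := by simp
  have h2 : ∀ᵐ a ∂ν, |g a - m| ≤ 2 * M := by
    filter_upwards [hae] with a ha
    have := abs_sub_le (g a) c m
    have h3 : |c - m| = |m - c| := abs_sub_comm c m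
    linarith
  have key : ∀ᵐ a ∂ν, exp (g a - m) ≤ (g a - m) + exp (4 * M ^ 2) := by
    filter_upwards [h2] with a ha
    have h1 := exp_le_add_exp_sq (g a - m)
    have h4 : exp ((g a - m) ^ 2) ≤ exp (4 * M ^ 2) := by
      apply exp_le_exp.2
      have h5 := abs_le.1 ha
      nlinarith [h5.1, h5.2]
    linarith
  have hgm : Integrable (fun a => g a - m) ν := hgi.sub (integrable_const m)
  have hInt2 : Integrable (fun a => (g a - m) + exp (4 * M ^ 2)) ν :=
    hgm.add (integrable_const _)
  calc ∫ a, exp (g a - m) ∂ν ≤ ∫ a, ((g a - m) + exp (4 * M ^ 2)) ∂ν :=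
        integral_mono_of_nonneg (Filter.Eventually.of_forall fun a => (exp_pos _).le) hInt2 key
    _ = (∫ a, g a ∂ν - m) + exp (4 * M ^ 2) := by
        rw [integral_add hgm (integrable_const _)]
        rw [integral_sub hgi (integrable_const m)]
        simp
    _ = exp (4 * M ^ 2) := by rw [← hm]; ring

variable {d : ℕ}

lemma ae_pi_norm_le (P : Measure (EuclideanSpace ℝ (Fin d))) [IsProbabilityMeasure P]
    (hP : ∀ᵐ ξ ∂P, ‖ξ‖ ≤ 1) (n : ℕ) :
    ∀ᵐ ξ ∂(Measure.pi fun _ : Fin n => P), ∀ i, ‖ξ i‖ ≤ 1 := by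
  have hball : P (Metric.closedBall 0 1)ᶜ = 0 := by
    have hseteq : (Metric.closedBall (0 : EuclideanSpace ℝ (Fin d)) 1)ᶜ
        = {a | ¬ ‖a‖ ≤ 1} := by
      ext a; simp [mem_closedBall_zero_iff]
    rw [hseteq]; exact ae_iff.1 hP
  have h1 : P (Metric.closedBall 0 1) = 1 :=
    (prob_compl_eq_zero_iff measurableSet_closedBall).1 hball
  have hSm : MeasurableSet (Set.pi Set.univ
      fun _ : Fin n => Metric.closedBall (0 : EuclideanSpace ℝ (Fin d)) 1) :=
    MeasurableSet.univ_pi fun _ => measurableSet_closedBall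
  have hS1 : (Measure.pi fun _ : Fin n => P)
      (Set.pi Set.univ fun _ => Metric.closedBall 0 1) = 1 := by
    rw [Measure.pi_pi]; simp [h1]
  have h0 : (Measure.pi fun _ : Fin n => P)
      (Set.pi Set.univ fun _ : Fin n => Metric.closedBall (0 : EuclideanSpace ℝ (Fin d)) 1)ᶜ
      = 0 := (prob_compl_eq_zero_iff hSm).2 hS1
  rw [ae_iff]
  refine measure_mono_null ?_ h0
  intro ξ hξ
  simp only [Set.mem_setOf_eq] at hξ
  intro hmem
  exact hξ fun i => by
    have := hmem i (Set.mem_univ i)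
    rwa [Metric.mem_closedBall, dist_zero_right] at this

lemma ae_prod_mem {α β : Type*} [MeasurableSpace α] [MeasurableSpace β]
    (μ : Measure α) (ν : Measure β) [SigmaFinite ν]
    {s : Set α} {t : Set β}
    (hμ : ∀ᵐ a ∂μ, a ∈ s) (hν : ∀ᵐ b ∂ν, b ∈ t) :
    ∀ᵐ z ∂(μ.prod ν), z.1 ∈ s ∧ z.2 ∈ t := by
  have hs0 : μ sᶜ = 0 := ae_iff.1 hμ
  have ht0 : ν tᶜ = 0 := ae_iff.1 hν
  have h1 : μ.prod ν (sᶜ ×ˢ (Set.univ : Set β)) = 0 := by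
    rw [Measure.prod_prod, hs0, zero_mul]
  have h2 : μ.prod ν ((Set.univ : Set α) ×ˢ tᶜ) = 0 := by
    rw [Measure.prod_prod, ht0, mul_zero]
  rw [ae_iff]
  refine measure_mono_null ?_ (measure_union_null h1 h2)
  intro z hz
  simp only [Set.mem_setOf_eq, not_and_or] at hz
  rcases hz with h | h
  · exact Or.inl ⟨h, trivial⟩
  · exact Or.inr ⟨trivial, h⟩

lemma measurable_consFun {n : ℕ} :
    Measurable (fun p : (EuclideanSpace ℝ (Fin d)) × (Fin n → EuclideanSpace ℝ (Fin d)) =>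
      (Fin.cons p.1 p.2 : Fin (n + 1) → EuclideanSpace ℝ (Fin d))) := by
  apply measurable_pi_iff.2
  intro i
  refine Fin.cases ?_ ?_ i
  · simpa using measurable_fst
  · intro j; simp only [Fin.cons_succ]; exact (measurable_pi_apply j).comp measurable_snd


lemma continuous_cons_left {n : ℕ} (w : Fin n → EuclideanSpace ℝ (Fin d)) :
    Continuous fun a : EuclideanSpace ℝ (Fin d) =>
      (Fin.cons a w : Fin (n + 1) → EuclideanSpace ℝ (Fin d)) := by
  apply continuous_pi
  intro i
  refine Fin.cases ?_ ?_ i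
  · simp only [Fin.cons_zero]; exact continuous_id
  · intro j; simpa using continuous_const

lemma SepLip.abs_le {E : Type*} [NormedAddCommGroup E] {n : ℕ}
    {F : (Fin n → E) → ℝ} {M : Fin n → ℝ} (hF : SepLip F M) (hM : ∀ j, 0 ≤ M j)
    {r : ℝ} (ξ : Fin n → E) (hξ : ∀ i, ‖ξ i‖ ≤ r) :
    |F ξ| ≤ |F (fun _ => 0)| + (∑ j, M j) * r := by
  have h1 := hF.dist_le' ξ (fun _ => 0)
  have h2 : ∑ j, |M j| * dist (ξ j) ((fun _ : Fin n => (0 : E)) j) ≤ (∑ j, M j) * r := by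
    rw [Finset.sum_mul]
    refine Finset.sum_le_sum fun j _ => ?_
    rw [abs_of_nonneg (hM j)]
    simp only [dist_zero_right]
    exact mul_le_mul_of_nonneg_left (hξ j) (hM j)
  have h3 := abs_sub_abs_le_abs_sub (F ξ) (F fun _ => 0)
  linarith [h1.trans h2]

lemma pi_conc (P : Measure (EuclideanSpace ℝ (Fin d))) [IsProbabilityMeasure P]
    (hP : ∀ᵐ ξ ∂P, ‖ξ‖ ≤ 1) :
    ∀ (n : ℕ) (F : (Fin n → EuclideanSpace ℝ (Fin d)) → ℝ) (M : Fin n → ℝ),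
      (∀ j, 0 ≤ M j) → SepLip F M →
      ∫ ξ, exp (F ξ - ∫ ζ, F ζ ∂(Measure.pi fun _ : Fin n => P))
          ∂(Measure.pi fun _ : Fin n => P)
        ≤ exp (4 * ∑ j, M j ^ 2) := by
  intro n
  induction n with
  | zero =>
    intro F M hM hF
    have hFc : ∀ ξ : Fin 0 → EuclideanSpace ℝ (Fin d), F ξ = F (fun i => i.elim0) := by
      intro ξ; congr 1; exact Subsingleton.elim _ _
    have : (fun ξ : Fin 0 → EuclideanSpace ℝ (Fin d) =>
        exp (F ξ - ∫ ζ, F ζ ∂(Measure.pi fun _ : Fin 0 => P)))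
        = fun _ => exp (F (fun i => i.elim0) - ∫ ζ, F ζ ∂(Measure.pi fun _ : Fin 0 => P)) := by
      funext ξ; rw [hFc ξ]
    rw [this, integral_const]
    have : ∫ ζ, F ζ ∂(Measure.pi fun _ : Fin 0 => P) = F (fun i => i.elim0) := by
      have : (fun ζ : Fin 0 → EuclideanSpace ℝ (Fin d) => F ζ)
          = fun _ => F (fun i => i.elim0) := by funext ζ; rw [hFc ζ]
      rw [this, integral_const]
      simp
    rw [this]
    simp
  | succ n ih =>
    intro F M hM hF
    set ν := (Measure.pi fun _ : Fin (n + 1) => P) with hν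
    set τ := (Measure.pi fun _ : Fin n => P) with hτ
    have mp := (measurePreserving_piFinSuccAbove (fun _ : Fin (n + 1) => P) 0).symm
    have hint : ∀ G : (Fin (n + 1) → EuclideanSpace ℝ (Fin d)) → ℝ,
        ∫ ξ, G ξ ∂ν = ∫ q, G (Fin.cons q.1 q.2) ∂(P.prod τ) := by
      intro G
      rw [← mp.integral_comp' G]
      congr 1
      funext q
      congr 1
      simp [MeasurableEquiv.piFinSuccAbove_symm_apply, Fin.insertNthEquiv,
        Fin.insertNth_zero]
    set m := ∫ ξ, F ξ ∂ν with hm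
    have hFc : Continuous F := hF.continuous'
    have hFm : Measurable F := hFc.measurable
    have haePi : ∀ᵐ ξ ∂ν, ∀ i, ‖ξ i‖ ≤ 1 := ae_pi_norm_le P hP (n + 1)
    have haeP : ∀ᵐ a ∂P, a ∈ Metric.closedBall (0 : EuclideanSpace ℝ (Fin d)) 1 := by
      filter_upwards [hP] with a ha
      rwa [Metric.mem_closedBall, dist_zero_right]
    have haeProd : ∀ᵐ q ∂(P.prod τ), ‖q.1‖ ≤ 1 ∧ ∀ i, ‖q.2 i‖ ≤ 1 := by
      have := ae_prod_mem P τ (s := Metric.closedBall 0 1)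
        (t := {w | ∀ i, ‖w i‖ ≤ 1}) haeP (ae_pi_norm_le P hP n)
      filter_upwards [this] with q hq
      exact ⟨by have := hq.1; rwa [Metric.mem_closedBall, dist_zero_right] at this, hq.2⟩
    have hFbd : ∀ ξ : Fin (n + 1) → EuclideanSpace ℝ (Fin d), (∀ i, ‖ξ i‖ ≤ 1) →
        |F ξ| ≤ |F (fun _ => 0)| + (∑ j : Fin (n + 1), M j) * 1 := fun ξ hξ =>
      hF.abs_le hM ξ hξ
    have hIntF : Integrable F ν := by
      refine integrable_of_ae_abs_le hFm.aestronglyMeasurable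
        (B := |F (fun _ => 0)| + (∑ j : Fin (n + 1), M j) * 1) ?_
      filter_upwards [haePi] with ξ hξ
      exact hFbd ξ hξ
    have hconsmeas : Measurable fun q :
        (EuclideanSpace ℝ (Fin d)) × (Fin n → EuclideanSpace ℝ (Fin d)) =>
        F (Fin.cons q.1 q.2) := hFm.comp measurable_consFun
    have hconsbd : ∀ᵐ q ∂(P.prod τ),
        ∀ i, ‖(Fin.cons q.1 q.2 : Fin (n + 1) → EuclideanSpace ℝ (Fin d)) i‖ ≤ 1 := by
      filter_upwards [haeProd] with q hq
      intro i
      refine Fin.cases ?_ ?_ i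
      · simpa using hq.1
      · intro j; simpa using hq.2 j
    have hexpInt : Integrable (fun q => exp (F (Fin.cons q.1 q.2) - m)) (P.prod τ) := by
      refine integrable_of_ae_abs_le
        ((continuous_exp.measurable.comp (hconsmeas.sub measurable_const)).aestronglyMeasurable)
        (B := exp ((|F (fun _ => 0)| + (∑ j : Fin (n + 1), M j) * 1) + |m|)) ?_
      filter_upwards [hconsbd] with q hq
      rw [Real.abs_exp]
      apply exp_le_exp.2
      have h1 := hFbd _ hq
      have h2 := abs_le.1 h1
      have h3 := le_abs_self m
      have h4 := neg_abs_le m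
      linarith [h2.1, h2.2]
    have hIntFcons : Integrable (fun q => F (Fin.cons q.1 q.2)) (P.prod τ) := by
      refine integrable_of_ae_abs_le hconsmeas.aestronglyMeasurable
        (B := |F (fun _ => 0)| + (∑ j : Fin (n + 1), M j) * 1) ?_
      filter_upwards [hconsbd] with q hq
      exact hFbd _ hq
    set Fb : (Fin n → EuclideanSpace ℝ (Fin d)) → ℝ :=
      fun w => ∫ a, F (Fin.cons a w) ∂P with hFbdef
    have hcontCons : ∀ w, Continuous fun a : EuclideanSpace ℝ (Fin d) =>
        F (Fin.cons a w) := fun w => hFc.comp (continuous_cons_left w)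
    have hslice : ∀ (w : Fin n → EuclideanSpace ℝ (Fin d)) (a : EuclideanSpace ℝ (Fin d)),
        |F (Fin.cons a w) - F (Fin.cons 0 w)| ≤ M 0 * dist a (0 : EuclideanSpace ℝ (Fin d)) := by
      intro w a
      have h1 := hF (Fin.cons a w) 0 0
      simp only [Fin.update_cons_zero, Fin.cons_zero] at h1
      exact h1
    have hInt1 : ∀ w, Integrable (fun a => F (Fin.cons a w)) P := by
      intro w
      refine integrable_of_ae_abs_le (hcontCons w).measurable.aestronglyMeasurable
        (B := |F (Fin.cons 0 w)| + M 0) ?_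
      filter_upwards [hP] with a ha
      have h1 := hslice w a
      have h2 : M 0 * dist a (0 : EuclideanSpace ℝ (Fin d)) ≤ M 0 := by
        rw [dist_zero_right]
        calc M 0 * ‖a‖ ≤ M 0 * 1 := mul_le_mul_of_nonneg_left ha (hM 0)
          _ = M 0 := mul_one _
      have h3 := abs_sub_abs_le_abs_sub (F (Fin.cons a w)) (F (Fin.cons (0 : EuclideanSpace ℝ (Fin d)) w))
      linarith
    have hFblip : SepLip Fb (fun j => M j.succ) := by
      intro w j y
      show |Fb w - Fb (Function.update w j y)| ≤ M j.succ * dist (w j) y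
      have key : ∀ a : EuclideanSpace ℝ (Fin d),
          |F (Fin.cons a w) - F (Fin.cons a (Function.update w j y))|
            ≤ M j.succ * dist (w j) y := by
        intro a
        have h1 := hF (Fin.cons a w) j.succ y
        rw [← Fin.cons_update] at h1
        rwa [Fin.cons_succ] at h1
      have hdiff : Fb w - Fb (Function.update w j y)
          = ∫ a, (F (Fin.cons a w) - F (Fin.cons a (Function.update w j y))) ∂P :=
        (integral_sub (hInt1 w) (hInt1 _)).symm
      rw [hdiff]
      calc |∫ a, (F (Fin.cons a w) - F (Fin.cons a (Function.update w j y))) ∂P|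
          ≤ ∫ a, |F (Fin.cons a w) - F (Fin.cons a (Function.update w j y))| ∂P := by
            simpa [Real.norm_eq_abs] using norm_integral_le_integral_norm (μ := P)
              (f := fun a => F (Fin.cons a w) - F (Fin.cons a (Function.update w j y)))
        _ ≤ ∫ _a, M j.succ * dist (w j) y ∂P :=
            integral_mono_of_nonneg (Filter.Eventually.of_forall fun a => abs_nonneg _)
              (integrable_const _) (Filter.Eventually.of_forall key)
        _ = M j.succ * dist (w j) y := by simp
    have hFbc : Continuous Fb := hFblip.continuous'
    have hm' : m = ∫ w, Fb w ∂τ := by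
      rw [hm, hint F, integral_prod_symm _ hIntFcons]
    have inner_le : ∀ w, ∫ a, exp (F (Fin.cons a w) - m) ∂P
        ≤ exp (4 * M 0 ^ 2) * exp (Fb w - m) := by
      intro w
      have hid : (fun a => exp (F (Fin.cons a w) - m))
          = fun a => exp (Fb w - m) * exp (F (Fin.cons a w) - Fb w) := by
        funext a; rw [← exp_add]; ring_nf
      rw [hid, integral_const_mul, mul_comm]
      refine mul_le_mul_of_nonneg_right ?_ (exp_pos _).le
      refine one_var P (fun a => F (Fin.cons a w))
        (hcontCons w).measurable.aestronglyMeasurable (F (Fin.cons 0 w)) (M 0) (Fb w) ?_ rfl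
      filter_upwards [hP] with a ha
      have h1 := hslice w a
      have h2 : M 0 * dist a (0 : EuclideanSpace ℝ (Fin d)) ≤ M 0 := by
        rw [dist_zero_right]
        calc M 0 * ‖a‖ ≤ M 0 * 1 := mul_le_mul_of_nonneg_left ha (hM 0)
          _ = M 0 := mul_one _
      linarith
    have hg2int : Integrable (fun w => exp (4 * M 0 ^ 2) * exp (Fb w - m)) τ := by
      refine integrable_of_ae_abs_le
        ((continuous_const.mul (continuous_exp.comp (hFbc.sub continuous_const))).measurable.aestronglyMeasurable)
        (B := exp (4 * M 0 ^ 2) * exp ((|Fb (fun _ => 0)| + (∑ j : Fin n, M j.succ) * 1) + |m|)) ?_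
      filter_upwards [ae_pi_norm_le P hP n] with w hw
      have h1 := hFblip.abs_le (fun j => hM j.succ) w hw
      rw [abs_mul, Real.abs_exp, Real.abs_exp]
      refine mul_le_mul_of_nonneg_left (exp_le_exp.2 ?_) (exp_pos _).le
      have h2 := abs_le.1 h1
      have h3 := neg_abs_le m
      linarith [h2.1, h2.2]
    calc ∫ ξ, exp (F ξ - m) ∂ν
        = ∫ q, exp (F (Fin.cons q.1 q.2) - m) ∂(P.prod τ) := hint _
      _ = ∫ w, (∫ a, exp (F (Fin.cons a w) - m) ∂P) ∂τ := by
          simpa using integral_prod_symm (fun q => exp (F (Fin.cons q.1 q.2) - m)) hexpInt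
      _ ≤ ∫ w, exp (4 * M 0 ^ 2) * exp (Fb w - m) ∂τ :=
          integral_mono_of_nonneg
            (Filter.Eventually.of_forall fun w => integral_nonneg fun a => (exp_pos _).le)
            hg2int (Filter.Eventually.of_forall inner_le)
      _ = exp (4 * M 0 ^ 2) * ∫ w, exp (Fb w - m) ∂τ := integral_const_mul _ _
      _ ≤ exp (4 * M 0 ^ 2) * exp (4 * ∑ j : Fin n, M j.succ ^ 2) := by
          refine mul_le_mul_of_nonneg_left ?_ (exp_pos _).le
          rw [hm']
          exact ih Fb (fun j => M j.succ) (fun j => hM j.succ) hFblip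
      _ = exp (4 * ∑ j : Fin (n + 1), M j ^ 2) := by
          rw [← exp_add, Fin.sum_univ_succ]
          ring_nf

/-- If the dynamical system `(X,T,μ)` satisfies the exponential concentration
inequality, then the system observed with i.i.d. noise of amplitude `ε`
satisfies an exponential concentration inequality with constant `D (1 + ε²)`. -/
theorem observed_system_exponential_concentration {d : ℕ}
    (X : Set (EuclideanSpace ℝ (Fin d))) (hX : IsCompact X)
    (T : EuclideanSpace ℝ (Fin d) → EuclideanSpace ℝ (Fin d))
    (hT : Measurable T) (hTX : Set.MapsTo T X X)
    (μ : Measure (EuclideanSpace ℝ (Fin d))) [IsProbabilityMeasure μ]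
    (hμX : μ X = 1) (hinv : μ.map T = μ)
    (C : ℝ) (hC : 0 < C)
    (hconc : ∀ (n : ℕ), 1 ≤ n → ∀ (K : (Fin n → EuclideanSpace ℝ (Fin d)) → ℝ)
      (L : Fin n → ℝ), SepLip K L →
      ∫ x, Real.exp (K (fun i => T^[(i : ℕ)] x)
          - ∫ z, K (fun i => T^[(i : ℕ)] z) ∂μ) ∂μ
        ≤ Real.exp (C * ∑ j, L j ^ 2))
    (P : Measure (EuclideanSpace ℝ (Fin d))) [IsProbabilityMeasure P]
    (hP : ∀ᵐ ξ ∂P, ‖ξ‖ ≤ 1) :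
    ∃ D : ℝ, 0 < D ∧ ∀ ε : ℝ, 0 < ε → ∀ (n : ℕ), 1 ≤ n →
      ∀ (K : (Fin n → EuclideanSpace ℝ (Fin d)) → ℝ) (L : Fin n → ℝ), SepLip K L →
      ∫ p, Real.exp (K (fun i => T^[(i : ℕ)] p.1 + ε • p.2 i)
          - ∫ p', K (fun i => T^[(i : ℕ)] p'.1 + ε • p'.2 i)
              ∂(μ.prod (Measure.pi fun _ : Fin n => P)))
        ∂(μ.prod (Measure.pi fun _ : Fin n => P))
        ≤ Real.exp (D * (1 + ε ^ 2) * ∑ j, L j ^ 2) := by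
  refine ⟨C + 4, by linarith, ?_⟩
  intro ε hε n hn K L hK
  set Pi : Measure (Fin n → EuclideanSpace ℝ (Fin d)) :=
    Measure.pi fun _ : Fin n => P with hPidef
  set M : Fin n → ℝ := fun j => |L j| with hMdef
  have hMnn : ∀ j, 0 ≤ M j := fun j => abs_nonneg _
  have hKM : SepLip K M := fun z j y =>
    (hK z j y).trans (mul_le_mul_of_nonneg_right (le_abs_self _) dist_nonneg)
  have hKc : Continuous K := hKM.continuous'
  obtain ⟨R, hR⟩ := hX.isBounded.exists_norm_le
  have hTit : ∀ k : ℕ, Measurable (T^[k]) := fun k => hT.iterate k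
  have homap : Measurable fun p : (EuclideanSpace ℝ (Fin d)) × (Fin n → EuclideanSpace ℝ (Fin d)) =>
      (fun i : Fin n => T^[(i : ℕ)] p.1 + ε • p.2 i) := by
    apply measurable_pi_iff.2
    intro i
    exact ((hTit i).comp measurable_fst).add
      (((measurable_pi_apply i).comp measurable_snd).const_smul ε)
  set Φ : (EuclideanSpace ℝ (Fin d)) × (Fin n → EuclideanSpace ℝ (Fin d)) → ℝ :=
    fun p => K (fun i => T^[(i : ℕ)] p.1 + ε • p.2 i) with hΦdef
  have hΦm : Measurable Φ := hKc.measurable.comp homap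
  have hμae : ∀ᵐ x ∂μ, x ∈ X := by
    rw [ae_iff]
    exact (prob_compl_eq_zero_iff hX.isClosed.measurableSet).2 hμX
  have horbmem : ∀ x ∈ X, ∀ i : Fin n, ‖T^[(i : ℕ)] x‖ ≤ R := fun x hx i =>
    hR _ (hTX.iterate i hx)
  have haeprod : ∀ᵐ p ∂(μ.prod Pi), p.1 ∈ X ∧ ∀ i, ‖p.2 i‖ ≤ 1 :=
    ae_prod_mem μ Pi (t := {w | ∀ i, ‖w i‖ ≤ 1}) hμae (ae_pi_norm_le P hP n)
  have hΦbd : ∀ p, p.1 ∈ X → (∀ i, ‖p.2 i‖ ≤ 1) →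
      |Φ p| ≤ |K (fun _ => 0)| + (∑ j, M j) * (R + ε) := by
    intro p hp1 hp2
    refine hKM.abs_le hMnn _ fun i => ?_
    calc ‖T^[(i : ℕ)] p.1 + ε • p.2 i‖ ≤ ‖T^[(i : ℕ)] p.1‖ + ‖ε • p.2 i‖ := norm_add_le _ _
      _ ≤ R + ε := by
          have h1 := horbmem p.1 hp1 i
          have h2 : ‖ε • p.2 i‖ = ε * ‖p.2 i‖ := by
            rw [norm_smul, Real.norm_eq_abs, abs_of_pos hε]
          have h3 := hp2 i
          nlinarith [norm_nonneg (p.2 i)]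
  set B : ℝ := |K (fun _ => 0)| + (∑ j, M j) * (R + ε) with hBdef
  have hΦae : ∀ᵐ p ∂(μ.prod Pi), |Φ p| ≤ B := by
    filter_upwards [haeprod] with p hp
    exact hΦbd p hp.1 hp.2
  have hIntΦ : Integrable Φ (μ.prod Pi) := integrable_of_ae_abs_le hΦm.aestronglyMeasurable hΦae
  set m : ℝ := ∫ p, Φ p ∂(μ.prod Pi) with hmdef
  have hexpΦInt : Integrable (fun p => exp (Φ p - m)) (μ.prod Pi) := by
    refine integrable_of_ae_abs_le
      ((continuous_exp.measurable.comp (hΦm.sub measurable_const)).aestronglyMeasurable)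
      (B := exp (B + |m|)) ?_
    filter_upwards [hΦae] with p hp
    rw [Real.abs_exp]
    refine exp_le_exp.2 ?_
    have h2 := abs_le.1 hp
    linarith [neg_abs_le m, h2.1, h2.2]
  set Kt : (Fin n → EuclideanSpace ℝ (Fin d)) → ℝ :=
    fun z => ∫ ξ, K (fun i => z i + ε • ξ i) ∂Pi with hKtdef
  have hcontz : ∀ z : Fin n → EuclideanSpace ℝ (Fin d), Continuous fun ξ : Fin n → EuclideanSpace ℝ (Fin d) =>
      K (fun i => z i + ε • ξ i) := fun z =>
    hKc.comp (continuous_pi fun i => continuous_const.add ((continuous_apply i).const_smul ε))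
  have hIntz : ∀ z : Fin n → EuclideanSpace ℝ (Fin d), Integrable (fun ξ => K (fun i => z i + ε • ξ i)) Pi := by
    intro z
    refine integrable_of_ae_abs_le (hcontz z).measurable.aestronglyMeasurable
      (B := |K z| + (∑ j, M j) * ε) ?_
    filter_upwards [ae_pi_norm_le P hP n] with ξ hξ
    have h1 := hKM.dist_le' (fun i => z i + ε • ξ i) z
    have h2 : ∑ j, |M j| * dist ((fun i => z i + ε • ξ i) j) (z j) ≤ (∑ j, M j) * ε := by
      rw [Finset.sum_mul]
      refine Finset.sum_le_sum fun j _ => ?_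
      rw [abs_of_nonneg (hMnn j)]
      have h3 : dist ((fun i => z i + ε • ξ i) j) (z j) = ε * ‖ξ j‖ := by
        simp only []
        rw [dist_eq_norm, add_sub_cancel_left, norm_smul, Real.norm_eq_abs, abs_of_pos hε]
      rw [h3]
      have h4 := hξ j
      nlinarith [mul_le_mul_of_nonneg_left h4 (mul_nonneg (hMnn j) hε.le)]
    have h5 := abs_sub_abs_le_abs_sub (K fun i => z i + ε • ξ i) (K z)
    linarith [h1.trans h2]
  have hKtlip : SepLip Kt L := by
    intro z j y
    show |Kt z - Kt (Function.update z j y)| ≤ L j * dist (z j) y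
    have key : ∀ ξ : Fin n → EuclideanSpace ℝ (Fin d), |K (fun i => z i + ε • ξ i)
        - K (fun i => Function.update z j y i + ε • ξ i)| ≤ L j * dist (z j) y := by
      intro ξ
      have hupd : (fun i => Function.update z j y i + ε • ξ i)
          = Function.update (fun i => z i + ε • ξ i) j (y + ε • ξ j) := by
        funext i
        rcases eq_or_ne i j with rfl | hij
        · simp
        · rw [Function.update_of_ne hij, Function.update_of_ne hij]
      rw [hupd]
      have h1 := hK (fun i => z i + ε • ξ i) j (y + ε • ξ j)
      simpa [dist_add_right] using h1
    have hdiff : Kt z - Kt (Function.update z j y)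
        = ∫ ξ, (K (fun i => z i + ε • ξ i)
            - K (fun i => Function.update z j y i + ε • ξ i)) ∂Pi :=
      (integral_sub (hIntz z) (hIntz _)).symm
    rw [hdiff]
    calc |∫ ξ, (K (fun i => z i + ε • ξ i)
            - K (fun i => Function.update z j y i + ε • ξ i)) ∂Pi|
        ≤ ∫ ξ, |K (fun i => z i + ε • ξ i)
            - K (fun i => Function.update z j y i + ε • ξ i)| ∂Pi := by
          simpa [Real.norm_eq_abs] using norm_integral_le_integral_norm (μ := Pi)
            (f := fun ξ => K (fun i => z i + ε • ξ i)
              - K (fun i => Function.update z j y i + ε • ξ i))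
      _ ≤ ∫ _ξ, L j * dist (z j) y ∂Pi :=
          integral_mono_of_nonneg (Filter.Eventually.of_forall fun ξ => abs_nonneg _)
            (integrable_const _) (Filter.Eventually.of_forall key)
      _ = L j * dist (z j) y := by simp
  have hKtM : SepLip Kt M := fun z j y =>
    (hKtlip z j y).trans (mul_le_mul_of_nonneg_right (le_abs_self _) dist_nonneg)
  have hKtc : Continuous Kt := hKtM.continuous'
  have horbm : Measurable fun x : EuclideanSpace ℝ (Fin d) =>
      (fun i : Fin n => T^[(i : ℕ)] x) := measurable_pi_iff.2 fun i => hTit i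
  have hm2 : m = ∫ x, Kt (fun i => T^[(i : ℕ)] x) ∂μ := by
    rw [hmdef, integral_prod _ hIntΦ]
  have hslice_all : ∀ x, ∫ ξ, exp (Φ (x, ξ) - m) ∂Pi
      ≤ exp (4 * ε ^ 2 * ∑ j, M j ^ 2) * exp (Kt (fun i => T^[(i : ℕ)] x) - m) := by
    intro x
    have hid : (fun ξ => exp (Φ (x, ξ) - m))
        = fun ξ => exp (Kt (fun i => T^[(i : ℕ)] x) - m)
            * exp (K (fun i => T^[(i : ℕ)] x + ε • ξ i) - Kt (fun i => T^[(i : ℕ)] x)) := by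
      funext ξ
      rw [← exp_add]
      simp only [hΦdef]
      ring_nf
    rw [hid, integral_const_mul, mul_comm]
    refine mul_le_mul_of_nonneg_right ?_ (exp_pos _).le
    have hFlip : SepLip (fun ξ : Fin n → EuclideanSpace ℝ (Fin d) =>
        K (fun i => T^[(i : ℕ)] x + ε • ξ i)) (fun j => ε * M j) := by
      intro ξ j y
      show |K (fun i => T^[(i : ℕ)] x + ε • ξ i)
          - K (fun i => T^[(i : ℕ)] x + ε • Function.update ξ j y i)| ≤ ε * M j * dist (ξ j) y
      have hupd : (fun i : Fin n => T^[(i : ℕ)] x + ε • Function.update ξ j y i)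
          = Function.update (fun i : Fin n => T^[(i : ℕ)] x + ε • ξ i) j (T^[(j : ℕ)] x + ε • y) := by
        funext i
        rcases eq_or_ne i j with rfl | hij
        · simp
        · rw [Function.update_of_ne hij, Function.update_of_ne hij]
      rw [hupd]
      have h1 := hKM (fun i : Fin n => T^[(i : ℕ)] x + ε • ξ i) j (T^[(j : ℕ)] x + ε • y)
      have h2 : dist (T^[(j : ℕ)] x + ε • ξ j) (T^[(j : ℕ)] x + ε • y) = ε * dist (ξ j) y := by
        rw [dist_add_left, dist_smul₀, Real.norm_eq_abs, abs_of_pos hε]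
      calc |K (fun i : Fin n => T^[(i : ℕ)] x + ε • ξ i)
          - K (Function.update (fun i : Fin n => T^[(i : ℕ)] x + ε • ξ i) j (T^[(j : ℕ)] x + ε • y))|
          ≤ M j * dist (T^[(j : ℕ)] x + ε • ξ j) (T^[(j : ℕ)] x + ε • y) := h1
        _ = ε * M j * dist (ξ j) y := by rw [h2]; ring
    have hpc := pi_conc P hP n _ (fun j => ε * M j)
      (fun j => mul_nonneg hε.le (hMnn j)) hFlip
    have hsum : ∑ j : Fin n, (ε * M j) ^ 2 = ε ^ 2 * ∑ j, M j ^ 2 := by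
      rw [Finset.mul_sum]
      exact Finset.sum_congr rfl fun j _ => by ring
    have hKtx : Kt (fun i => T^[(i : ℕ)] x)
        = ∫ ζ, K (fun i => T^[(i : ℕ)] x + ε • ζ i) ∂Pi := by
      simp only [hKtdef]
    calc ∫ ξ, exp (K (fun i => T^[(i : ℕ)] x + ε • ξ i) - Kt (fun i => T^[(i : ℕ)] x)) ∂Pi
        ≤ exp (4 * ∑ j : Fin n, (ε * M j) ^ 2) := by rw [hKtx]; exact hpc
      _ = exp (4 * ε ^ 2 * ∑ j, M j ^ 2) := by rw [hsum]; ring_nf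
  have hg2int : Integrable (fun x => exp (4 * ε ^ 2 * ∑ j, M j ^ 2)
      * exp (Kt (fun i => T^[(i : ℕ)] x) - m)) μ := by
    refine integrable_of_ae_abs_le
      ((measurable_const.mul (continuous_exp.measurable.comp
        ((hKtc.measurable.comp horbm).sub measurable_const))).aestronglyMeasurable)
      (B := exp (4 * ε ^ 2 * ∑ j, M j ^ 2)
        * exp ((|Kt (fun _ => 0)| + (∑ j, M j) * R) + |m|)) ?_
    filter_upwards [hμae] with x hx
    have h1 := hKtM.abs_le hMnn (fun i => T^[(i : ℕ)] x) fun i => horbmem x hx i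
    rw [abs_mul, Real.abs_exp, Real.abs_exp]
    refine mul_le_mul_of_nonneg_left (exp_le_exp.2 ?_) (exp_pos _).le
    have h2 := abs_le.1 h1
    linarith [neg_abs_le m, h2.1, h2.2]
  calc ∫ p, exp (Φ p - m) ∂(μ.prod Pi)
      = ∫ x, (∫ ξ, exp (Φ (x, ξ) - m) ∂Pi) ∂μ := by
        simpa using integral_prod (fun p => exp (Φ p - m)) hexpΦInt
    _ ≤ ∫ x, exp (4 * ε ^ 2 * ∑ j, M j ^ 2) * exp (Kt (fun i => T^[(i : ℕ)] x) - m) ∂μ :=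
        integral_mono_of_nonneg
          (Filter.Eventually.of_forall fun x => integral_nonneg fun ξ => (exp_pos _).le)
          hg2int (Filter.Eventually.of_forall hslice_all)
    _ = exp (4 * ε ^ 2 * ∑ j, M j ^ 2) * ∫ x, exp (Kt (fun i => T^[(i : ℕ)] x) - m) ∂μ :=
        integral_const_mul _ _
    _ ≤ exp (4 * ε ^ 2 * ∑ j, M j ^ 2) * exp (C * ∑ j, L j ^ 2) := by
        refine mul_le_mul_of_nonneg_left ?_ (exp_pos _).le
        rw [hm2]
        exact hconc n hn Kt L hKtlip
    _ ≤ exp ((C + 4) * (1 + ε ^ 2) * ∑ j, L j ^ 2) := by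
        rw [← exp_add]
        apply exp_le_exp.2
        have hsum : ∑ j, M j ^ 2 = ∑ j : Fin n, L j ^ 2 :=
          Finset.sum_congr rfl fun j _ => by simp only [hMdef]; rw [sq_abs]
        rw [hsum]
        have hS : 0 ≤ ∑ j : Fin n, L j ^ 2 := Finset.sum_nonneg fun j _ => sq_nonneg _
        nlinarith [mul_nonneg (mul_nonneg hC.le (sq_nonneg ε)) hS, hS]
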